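/- Let M be a map from histograms x ∈ ℕ^N to probability measures on a measurable space Y that is d_X-private. Let k ≥ 2 and let x, x' ∈ ℕ^N satisfy ‖x−x'‖₁ ≤ k, ‖x‖₁ = ‖x'‖₁, and let V = {i : xᵢ ≠ x'ᵢ} be the set of indices where x and x' differ, with |V| ≥ 2. Then for every measurable S ⊆ Y, M(x)(S) ≤ exp(k · max_{i,j ∈ V} d_X(i,j)) · M(x')(S). -/

import Mathlib

open MeasureTheory Finset

/-- Two histograms `x, x'` over a universe of size `N` are `(i,j)`-neighbors:
`‖x − x'‖₁ ≤ 2`, `xᵢ ≠ x'ᵢ` and `xⱼ ≠ x'ⱼ`. -/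
def Neighbors {N : ℕ} (i j : Fin N) (x x' : Fin N → ℕ) : Prop :=
  (∑ l, |(x l : ℤ) - (x' l : ℤ)|) ≤ 2 ∧ x i ≠ x' i ∧ x j ≠ x' j

/-- `dX` is a privacy budget: nonnegative, symmetric, zero on the diagonal,
satisfying the triangle inequality. -/
def PrivacyBudget {N : ℕ} (dX : Fin N → Fin N → ℝ) : Prop :=
  (∀ i j, 0 ≤ dX i j) ∧ (∀ i j, dX i j = dX j i) ∧ (∀ i, dX i i = 0) ∧
    (∀ i j k, dX i j ≤ dX i k + dX k j)

/-- A mechanism `M` (a map from histograms to probability measures on `Y`) is `dX`-private. -/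
def DXPrivate {N : ℕ} {Y : Type*} [MeasurableSpace Y]
    (dX : Fin N → Fin N → ℝ) (M : (Fin N → ℕ) → Measure Y) : Prop :=
  ∀ i j : Fin N, i ≠ j → ∀ x x' : Fin N → ℕ, Neighbors i j x x' →
    ∀ S : Set Y, MeasurableSet S →
      M x S ≤ ENNReal.ofReal (Real.exp (dX i j)) * M x' S

/-- Group privacy: if `M` is `dX`-private and `x, x'` satisfy `‖x − x'‖₁ ≤ k`
(with `k ≥ 2`) and have the same size, then for every measurable `S`,
`M x S ≤ exp (k · max_{i,j ∈ V} dX i j) · M x' S`, where `V` is the set of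
indices where `x` and `x'` differ. -/
theorem stmt_2 {N : ℕ} {Y : Type*} [MeasurableSpace Y]
    (dX : Fin N → Fin N → ℝ) (hdX : PrivacyBudget dX)
    (M : (Fin N → ℕ) → Measure Y) (hprob : ∀ x, IsProbabilityMeasure (M x))
    (hpriv : DXPrivate dX M)
    (k : ℕ) (hk : 2 ≤ k) (x x' : Fin N → ℕ)
    (hdist : (∑ l, |(x l : ℤ) - (x' l : ℤ)|) ≤ (k : ℤ))
    (hsize : ∑ l, x l = ∑ l, x' l)
    (V : Finset (Fin N)) (hV : V = Finset.univ.filter fun l => x l ≠ x' l)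
    (hVcard : 2 ≤ V.card)
    (S : Set Y) (hS : MeasurableSet S) :
    M x S ≤ ENNReal.ofReal (Real.exp ((k : ℝ) *
        (V ×ˢ V).sup'
          (Finset.Nonempty.product (Finset.card_pos.mp (by omega))
            (Finset.card_pos.mp (by omega)))
          (fun p => dX p.1 p.2))) * M x' S := by
  have hVne : V.Nonempty := Finset.card_pos.mp (by omega)
  set D : ℝ := (V ×ˢ V).sup'
      (Finset.Nonempty.product (Finset.card_pos.mp (by omega : 0 < V.card))
        (Finset.card_pos.mp (by omega : 0 < V.card)))
      (fun p => dX p.1 p.2) with hD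
  obtain ⟨a, haV⟩ := hVne
  have hD0 : 0 ≤ D := by
    have := Finset.le_sup' (fun p : Fin N × Fin N => dX p.1 p.2)
      (Finset.mk_mem_product haV haV)
    simpa only [hdX.2.2.1 a] using this
  have hDle : ∀ i ∈ V, ∀ j ∈ V, dX i j ≤ D := by
    intro i hi j hj
    have := Finset.le_sup' (fun p : Fin N × Fin N => dX p.1 p.2)
      (Finset.mk_mem_product hi hj)
    exact this
  have key : ∀ n : ℕ, ∀ z : Fin N → ℕ,
      (∑ l, |(z l : ℤ) - (x' l : ℤ)|) ≤ 2 * n →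
      (∑ l, z l = ∑ l, x' l) →
      (∀ l, z l ≠ x' l → l ∈ V) →
      M z S ≤ ENNReal.ofReal (Real.exp ((n : ℝ) * D)) * M x' S := by
    intro n
    induction n with
    | zero =>
      intro z hd hs hsub
      have hzz : z = x' := by
        funext l
        have h1 : ∀ l ∈ Finset.univ, (0 : ℤ) ≤ |(z l : ℤ) - (x' l : ℤ)| :=
          fun l _ => abs_nonneg _
        have h2 : (∑ l, |(z l : ℤ) - (x' l : ℤ)|) = 0 :=
          le_antisymm (by simpa using hd) (Finset.sum_nonneg h1)
        have h3 := (Finset.sum_eq_zero_iff_of_nonneg h1).mp h2 l (Finset.mem_univ l)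
        have : (z l : ℤ) = (x' l : ℤ) := by
          have := abs_eq_zero.mp h3; omega
        exact_mod_cast this
      simp [hzz]
    | succ n ih =>
      intro z hd hs hsub
      by_cases hzz : z = x'
      · subst hzz
        refine le_mul_of_one_le_left zero_le ?_
        refine ENNReal.one_le_ofReal.mpr (Real.one_le_exp ?_)
        positivity
      · -- find i with z i > x' i and j with z j < x' j
        have hne : ∃ l, z l ≠ x' l := by
          by_contra h
          push_neg at h
          exact hzz (funext h)
        have hi : ∃ i, x' i < z i := by
          by_contra h
          push_neg at h
          obtain ⟨l0, hl0⟩ := hne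
          have hlt : z l0 < x' l0 := lt_of_le_of_ne (h l0) hl0
          have : ∑ l, z l < ∑ l, x' l :=
            Finset.sum_lt_sum (fun l _ => h l) ⟨l0, Finset.mem_univ l0, hlt⟩
          omega
        have hj : ∃ j, z j < x' j := by
          by_contra h
          push_neg at h
          obtain ⟨l0, hl0⟩ := hne
          have hlt : x' l0 < z l0 := lt_of_le_of_ne (h l0) (Ne.symm hl0)
          have : ∑ l, x' l < ∑ l, z l :=
            Finset.sum_lt_sum (fun l _ => h l) ⟨l0, Finset.mem_univ l0, hlt⟩
          omega
        obtain ⟨i, hi⟩ := hi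
        obtain ⟨j, hj⟩ := hj
        have hij : i ≠ j := by
          intro h; subst h; omega
        have hiV : i ∈ V := hsub i (by omega)
        have hjV : j ∈ V := hsub j (by omega)
        set z₁ : Fin N → ℕ :=
          Function.update (Function.update z i (z i - 1)) j (z j + 1) with hz₁
        have hz₁i : z₁ i = z i - 1 := by
          simp [hz₁, Function.update_apply, hij]
        have hz₁j : z₁ j = z j + 1 := by
          simp [hz₁, Function.update_apply]
        have hz₁l : ∀ l, l ≠ i → l ≠ j → z₁ l = z l := by
          intro l hli hlj
          simp [hz₁, Function.update_apply, hli, hlj]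
        -- Neighbors i j z z₁
        have habs : ∀ l, |(z l : ℤ) - (z₁ l : ℤ)| =
            (if l = i then 1 else 0) + (if l = j then 1 else 0) := by
          intro l
          by_cases hli : l = i
          · subst hli
            rw [hz₁i]
            have h1 : 1 ≤ z l := by omega
            rw [Nat.cast_sub h1]
            simp [hij, abs_of_nonneg]
          · by_cases hlj : l = j
            · subst hlj
              rw [hz₁j]
              push_cast
              simp [hli, abs_of_nonpos]
            · rw [hz₁l l hli hlj]
              simp [hli, hlj]
        have hnb : Neighbors i j z z₁ := by
          refine ⟨?_, ?_, ?_⟩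
          · rw [Finset.sum_congr rfl (fun l _ => habs l)]
            rw [Finset.sum_add_distrib]
            simp [Finset.sum_ite_eq']
          · rw [hz₁i]; omega
          · rw [hz₁j]; omega
        have hstep := hpriv i j hij z z₁ hnb S hS
        -- distance drops by 2
        have habs2 : ∀ l, |(z₁ l : ℤ) - (x' l : ℤ)| =
            |(z l : ℤ) - (x' l : ℤ)|
              - (if l = i then 1 else 0) - (if l = j then 1 else 0) := by
          intro l
          by_cases hli : l = i
          · subst hli
            rw [hz₁i]
            have h1 : 1 ≤ z l := by omega
            rw [Nat.cast_sub h1]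
            push_cast
            have hc : (x' l : ℤ) < (z l : ℤ) := by exact_mod_cast hi
            rw [abs_of_nonneg (by omega : (0:ℤ) ≤ (z l : ℤ) - 1 - (x' l : ℤ)),
              abs_of_nonneg (by omega : (0:ℤ) ≤ (z l : ℤ) - (x' l : ℤ))]
            simp [hij]
            omega
          · by_cases hlj : l = j
            · subst hlj
              rw [hz₁j]
              have hc : (z l : ℤ) < (x' l : ℤ) := by exact_mod_cast hj
              push_cast
              rw [abs_of_nonpos (by omega : (z l : ℤ) + 1 - (x' l : ℤ) ≤ 0),
                abs_of_nonpos (by omega : (z l : ℤ) - (x' l : ℤ) ≤ 0)]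
              simp [hli]
              omega
            · rw [hz₁l l hli hlj]
              simp [hli, hlj]
        have hd1 : (∑ l, |(z₁ l : ℤ) - (x' l : ℤ)|) ≤ 2 * n := by
          rw [Finset.sum_congr rfl (fun l _ => habs2 l)]
          rw [Finset.sum_sub_distrib, Finset.sum_sub_distrib]
          simp only [Finset.sum_ite_eq', Finset.mem_univ, if_true]
          push_cast at hd ⊢
          omega
        have hs1 : ∑ l, z₁ l = ∑ l, x' l := by
          have hpt : ∀ l ∈ Finset.univ,
              z₁ l + (if l = i then 1 else 0) = z l + (if l = j then 1 else 0) := by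
            intro l _
            by_cases hli : l = i
            · subst hli; rw [hz₁i]; simp [hij]; omega
            · by_cases hlj : l = j
              · subst hlj; rw [hz₁j]; simp [hli]
              · rw [hz₁l l hli hlj]; simp [hli, hlj]
          have := Finset.sum_congr rfl hpt
          rw [Finset.sum_add_distrib, Finset.sum_add_distrib] at this
          simp only [Finset.sum_ite_eq', Finset.mem_univ, if_true] at this
          omega
        have hsub1 : ∀ l, z₁ l ≠ x' l → l ∈ V := by
          intro l hl
          by_cases hli : l = i
          · subst hli; exact hiV
          · by_cases hlj : l = j
            · subst hlj; exact hjV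
            · exact hsub l (by rw [hz₁l l hli hlj] at hl; exact hl)
        have hih := ih z₁ hd1 hs1 hsub1
        calc M z S ≤ ENNReal.ofReal (Real.exp (dX i j)) * M z₁ S := hstep
          _ ≤ ENNReal.ofReal (Real.exp D) *
              (ENNReal.ofReal (Real.exp ((n : ℝ) * D)) * M x' S) := by
              refine mul_le_mul' ?_ hih
              exact ENNReal.ofReal_le_ofReal (Real.exp_le_exp.mpr (hDle i hiV j hjV))
          _ = ENNReal.ofReal (Real.exp (((n : ℝ) + 1) * D)) * M x' S := by
              rw [← mul_assoc, ← ENNReal.ofReal_mul (Real.exp_nonneg _),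
                ← Real.exp_add]
              ring_nf
          _ = ENNReal.ofReal (Real.exp ((((n : ℕ) + 1 : ℕ) : ℝ) * D)) * M x' S := by
              push_cast; ring_nf
  have hsubV : ∀ l, x l ≠ x' l → l ∈ V := by
    intro l hl; rw [hV]; simp [hl]
  have := key k x (by omega) hsize hsubV
  simpa using this
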